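/- Let V be a finite set, let G⁺ and G⁻ be edge-disjoint simple graphs on V (positive and negative edges of a signed non-complete graph), and let N⁺_v, N⁻_v denote the respective closed positive and negative neighborhoods (with v ∈ N⁺_v). For a partition Π of V, define the disagreement of v as the number of w ≠ v such that either {v,w} is a positive edge and w ∉ [v]_Π, or {v,w} is a negative edge and w ∈ [v]_Π, and let φ(Π) be the maximum disagreement. If u, v ∈ V satisfy |(N⁺_u ∩ N⁻_v) ∪ (N⁻_u ∩ N⁺_v)| > 2·φ(Π), then u and v lie in distinct blocks of Π. -/
import Mathlib


open scoped symmDiff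

open Finset

variable {V : Type*} [Fintype V] [DecidableEq V]

/-- `P` encodes a partition of `V`, where `P v` is the block containing `v`. -/
def IsPartitionFun (P : V → Finset V) : Prop :=
  (∀ v, v ∈ P v) ∧ ∀ u v : V, u ∈ P v → P u = P v

/-- Closed positive neighborhood of `v`. -/
def nbhdPos (Gp : SimpleGraph V) [DecidableRel Gp.Adj] (v : V) : Finset V :=
  insert v (Gp.neighborFinset v)

/-- Negative neighborhood of `v`. -/
def nbhdNeg (Gm : SimpleGraph V) [DecidableRel Gm.Adj] (v : V) : Finset V :=
  Gm.neighborFinset v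

/-- Disagreement of `v` with the partition `P` in a signed (non-complete) graph. -/
def disagreeSigned (Gp Gm : SimpleGraph V) [DecidableRel Gp.Adj] [DecidableRel Gm.Adj]
    (P : V → Finset V) (v : V) : ℕ :=
  (Finset.univ.filter fun w =>
    (Gp.Adj v w ∧ P w ≠ P v) ∨ (Gm.Adj v w ∧ P w = P v)).card

/-- Maximum disagreement in the signed setting. -/
def phiSigned (Gp Gm : SimpleGraph V) [DecidableRel Gp.Adj] [DecidableRel Gm.Adj]
    (P : V → Finset V) : ℕ :=
  Finset.univ.sup (disagreeSigned Gp Gm P)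

theorem statement15 (Gp Gm : SimpleGraph V) [DecidableRel Gp.Adj] [DecidableRel Gm.Adj]
    (hdisj : ∀ u v : V, ¬ (Gp.Adj u v ∧ Gm.Adj u v))
    (P : V → Finset V) (hP : IsPartitionFun P) (u v : V)
    (h : 2 * phiSigned Gp Gm P <
      ((nbhdPos Gp u ∩ nbhdNeg Gm v) ∪ (nbhdNeg Gm u ∩ nbhdPos Gp v)).card) :
    P u ≠ P v := by
  intro hPuv
  apply absurd h
  push_neg
  have hsub : (nbhdPos Gp u ∩ nbhdNeg Gm v) ∪ (nbhdNeg Gm u ∩ nbhdPos Gp v) ⊆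
      (Finset.univ.filter fun w =>
        (Gp.Adj u w ∧ P w ≠ P u) ∨ (Gm.Adj u w ∧ P w = P u)) ∪
      (Finset.univ.filter fun w =>
        (Gp.Adj v w ∧ P w ≠ P v) ∨ (Gm.Adj v w ∧ P w = P v)) := by
    intro w hw
    simp only [nbhdPos, nbhdNeg, Finset.mem_union, Finset.mem_inter, Finset.mem_insert,
      SimpleGraph.mem_neighborFinset, Finset.mem_filter, Finset.mem_univ, true_and] at hw ⊢
    rcases hw with ⟨hwp, hwm⟩ | ⟨hwm, hwp⟩
    · by_cases hwu : P w = P u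
      · exact Or.inr (Or.inr ⟨hwm, hwu.trans hPuv⟩)
      · rcases hwp with rfl | hwp
        · exact absurd rfl hwu
        · exact Or.inl (Or.inl ⟨hwp, hwu⟩)
    · by_cases hwv : P w = P v
      · exact Or.inl (Or.inr ⟨hwm, hwv.trans hPuv.symm⟩)
      · rcases hwp with rfl | hwp
        · exact absurd rfl hwv
        · exact Or.inr (Or.inl ⟨hwp, hwv⟩)
  calc ((nbhdPos Gp u ∩ nbhdNeg Gm v) ∪ (nbhdNeg Gm u ∩ nbhdPos Gp v)).card
      ≤ _ := Finset.card_le_card hsub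
    _ ≤ disagreeSigned Gp Gm P u + disagreeSigned Gp Gm P v := Finset.card_union_le _ _
    _ ≤ phiSigned Gp Gm P + phiSigned Gp Gm P :=
        Nat.add_le_add (Finset.le_sup (Finset.mem_univ u)) (Finset.le_sup (Finset.mem_univ v))
    _ = 2 * phiSigned Gp Gm P := (two_mul _).symm
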